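/- For all integers i, n, m with m ≥ n+2 and 0 ≤ i ≤ n−1: 2^i · n!/(n−i)! · (n−i+1)^{m−i−1} · 2^{(m−i−1)(m−i−2)/2} ≤ (1/2^i) · (n+1)^{m−1} · 2^{(m−1)(m−2)/2}. -/
import Mathlib

lemma fewnomial_step (i D b c : ℕ) :
    4^(i+1) * ((b+2)*D) * (b+2)^(b+c+2) * 2^((b+c+2)*(b+c+1)/2)
    ≤ 4^i * D * (b+3)^(b+c+3) * 2^((b+c+3)*(b+c+2)/2) := by
  obtain ⟨t, ht⟩ : 2 ∣ (b+c+2)*(b+c+1) := by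
    rw [Nat.mul_comm]; exact (Nat.even_mul_succ_self _).two_dvd
  have h1 : (b+c+3)*(b+c+2) = (b+c+2)*(b+c+1) + 2*(b+c+2) := by ring
  have hE : (b+c+3)*(b+c+2)/2 = (b+c+2)*(b+c+1)/2 + (b+c+2) := by
    rw [h1, ht]; omega
  rw [hE]
  have key4 : 4*(b+2)^(b+c+3) ≤ (b+3)^(b+c+3) * 2^(b+c+2) := by
    have h1 : (b+2)^(b+c+3) ≤ (b+3)^(b+c+3) := Nat.pow_le_pow_left (by omega) _
    have h2 : 4 ≤ 2^(b+c+2) := by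
      calc (4:ℕ) = 2^2 := rfl
      _ ≤ 2^(b+c+2) := Nat.pow_le_pow_right (by norm_num) (by omega)
    calc 4*(b+2)^(b+c+3) ≤ 2^(b+c+2) * (b+3)^(b+c+3) := Nat.mul_le_mul h2 h1
    _ = (b+3)^(b+c+3)*2^(b+c+2) := Nat.mul_comm _ _
  calc 4^(i+1) * ((b+2)*D) * (b+2)^(b+c+2) * 2^((b+c+2)*(b+c+1)/2)
      = (4^i * D * 2^((b+c+2)*(b+c+1)/2)) * (4*(b+2)^(b+c+3)) := by ring
    _ ≤ (4^i * D * 2^((b+c+2)*(b+c+1)/2)) * ((b+3)^(b+c+3)*2^(b+c+2)) :=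
        Nat.mul_le_mul_left _ key4
    _ = 4^i * D * (b+3)^(b+c+3) * 2^((b+c+2)*(b+c+1)/2 + (b+c+2)) := by
        rw [pow_add]; ring

lemma fewnomial_key (i n m : ℕ) (hm : n + 2 ≤ m) (hi : i ≤ n - 1) :
    4 ^ i * n.descFactorial i * (n - i + 1) ^ (m - i - 1) *
      2 ^ ((m - i - 1) * (m - i - 2) / 2)
    ≤ (n + 1) ^ (m - 1) * 2 ^ ((m - 1) * (m - 2) / 2) := by
  induction i with
  | zero => simp
  | succ i ih =>
    obtain ⟨b, hb⟩ : ∃ b, n = i + 2 + b := ⟨n - (i+2), by omega⟩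
    obtain ⟨c, hc⟩ : ∃ c, m = i + 4 + b + c := ⟨m - (i+4+b), by omega⟩
    subst hb hc
    have ih' := ih (by omega)
    have e1 : i + 2 + b - (i + 1) + 1 = b + 2 := by omega
    have e2 : i + 4 + b + c - (i + 1) - 1 = b + c + 2 := by omega
    have e3 : i + 4 + b + c - (i + 1) - 2 = b + c + 1 := by omega
    have e4 : i + 2 + b - i + 1 = b + 3 := by omega
    have e5 : i + 4 + b + c - i - 1 = b + c + 3 := by omega
    have e6 : i + 4 + b + c - i - 2 = b + c + 2 := by omega
    have e7 : (i + 2 + b).descFactorial (i+1)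
        = (b + 2) * (i + 2 + b).descFactorial i := by
      rw [Nat.descFactorial_succ]; congr 1; omega
    rw [e1, e2, e3, e7]
    rw [e4, e5, e6] at ih'
    exact le_trans (fewnomial_step i _ b c) ih'

/-- Arithmetic inequality: for integers `i, n, m` with `m ≥ n + 2` and
`0 ≤ i ≤ n - 1`,
`2^i · n!/(n-i)! · (n-i+1)^(m-i-1) · 2^((m-i-1)(m-i-2)/2)
  ≤ (1/2^i) · (n+1)^(m-1) · 2^((m-1)(m-2)/2)`. -/
theorem fewnomial_arithmetic_inequality (i n m : ℕ)
    (hm : n + 2 ≤ m) (hi : i ≤ n - 1) :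
    (2 : ℝ) ^ i * ((n.factorial : ℝ) / ((n - i).factorial : ℝ)) *
        ((n : ℝ) - i + 1) ^ (m - i - 1) *
        (2 : ℝ) ^ ((m - i - 1) * (m - i - 2) / 2)
      ≤ (1 / (2 : ℝ) ^ i) * ((n : ℝ) + 1) ^ (m - 1) *
        (2 : ℝ) ^ ((m - 1) * (m - 2) / 2) := by
  have hin : i ≤ n := by omega
  have hD : (n.factorial : ℝ) / ((n - i).factorial : ℝ)
      = (n.descFactorial i : ℝ) := by
    rw [div_eq_iff (by exact_mod_cast (n - i).factorial_pos.ne')]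
    exact_mod_cast (Nat.factorial_mul_descFactorial hin).symm.trans
      (Nat.mul_comm _ _)
  have hcast : ((n : ℝ) - i + 1) = ((n - i + 1 : ℕ) : ℝ) := by
    push_cast [Nat.cast_sub hin]; ring
  rw [hD, hcast]
  have hkey := fewnomial_key i n m hm hi
  have hkeyR : (4:ℝ) ^ i * (n.descFactorial i : ℝ) * ((n - i + 1 : ℕ) : ℝ) ^ (m - i - 1) *
      (2:ℝ) ^ ((m - i - 1) * (m - i - 2) / 2)
      ≤ ((n:ℝ) + 1) ^ (m - 1) * (2:ℝ) ^ ((m - 1) * (m - 2) / 2) := by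
    exact_mod_cast hkey
  have h2 : (0:ℝ) < 2 ^ i := by positivity
  rw [show (1/(2:ℝ)^i) * ((n:ℝ)+1)^(m-1) * 2^((m-1)*(m-2)/2)
      = (((n:ℝ)+1)^(m-1) * 2^((m-1)*(m-2)/2))/2^i from by ring, le_div_iff₀ h2]
  calc (2:ℝ) ^ i * (n.descFactorial i : ℝ) * ((n - i + 1 : ℕ) : ℝ) ^ (m - i - 1) *
      (2:ℝ) ^ ((m - i - 1) * (m - i - 2) / 2) * 2 ^ i
      = (4:ℝ) ^ i * (n.descFactorial i : ℝ) * ((n - i + 1 : ℕ) : ℝ) ^ (m - i - 1) *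
        (2:ℝ) ^ ((m - i - 1) * (m - i - 2) / 2) := by
        rw [show (4:ℝ) = 2*2 from by norm_num, mul_pow]; ring
    _ ≤ ((n:ℝ) + 1) ^ (m - 1) * (2:ℝ) ^ ((m - 1) * (m - 2) / 2) := hkeyR
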